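/- Let ρ₁, ρ₂, ρ₃ be 2×2 complex density matrices (positive semidefinite with trace 1), each of which is diagonal in the standard basis of ℂ². Let M₁, M₂, M₃ be 2×2 positive semidefinite complex matrices with M₁ + M₂ + M₃ = I. Then there exist a 3×2 row-stochastic real matrix P^A and a 2×3 row-stochastic real matrix P^B such that Tr(M_k ρ_i) = ∑_{j=1}^{2} P^A(i,j) P^B(j,k) for all i, k ∈ {1,2,3}. -/

import Mathlib

open Matrix ComplexOrder

/-- A real matrix is row-stochastic if all entries are nonnegative and each row sums to 1. -/
def RowStochastic {m n : ℕ} (P : Matrix (Fin m) (Fin n) ℝ) : Prop :=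
  (∀ i j, 0 ≤ P i j) ∧ ∀ i, ∑ j, P i j = 1

lemma psd_diag_nonneg {n : ℕ} {A : Matrix (Fin n) (Fin n) ℂ} (h : A.PosSemidef) (j : Fin n) :
    (0 : ℂ) ≤ A j j := by
  have := h.dotProduct_mulVec_nonneg (Pi.single j 1)
  simpa [Matrix.mulVec, dotProduct, Pi.single_apply] using this

lemma psd_diag_eq_re {n : ℕ} {A : Matrix (Fin n) (Fin n) ℂ} (h : A.PosSemidef) (j : Fin n) :
    A j j = ((A j j).re : ℂ) :=
  (h.1.coe_re_apply_self j).symm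

/-- **Proposition 3, first half.** A quantum strategy whose encoding states `ρ_i` are all
diagonal in the standard basis (no coherence) can be simulated by a classical 1-bit
strategy: the outcome probabilities `Tr(M_k ρ_i)` of any 3-outcome POVM `{M_k}` factor
through a pair of row-stochastic matrices. -/
theorem diagonal_states_classically_simulable
    (ρ : Fin 3 → Matrix (Fin 2) (Fin 2) ℂ)
    (hρ : ∀ i, (ρ i).PosSemidef ∧ (ρ i).trace = 1)
    (hdiag : ∀ i, ∀ a b : Fin 2, a ≠ b → ρ i a b = 0)
    (M : Fin 3 → Matrix (Fin 2) (Fin 2) ℂ)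
    (hM : ∀ k, (M k).PosSemidef) (hMsum : ∑ k, M k = 1) :
    ∃ (PA : Matrix (Fin 3) (Fin 2) ℝ) (PB : Matrix (Fin 2) (Fin 3) ℝ),
      RowStochastic PA ∧ RowStochastic PB ∧
      ∀ i k, (M k * ρ i).trace = ((∑ j, PA i j * PB j k : ℝ) : ℂ) := by
  refine ⟨fun i j => (ρ i j j).re, fun j k => (M k j j).re, ⟨?_, ?_⟩, ⟨?_, ?_⟩, ?_⟩
  · intro i j
    exact (Complex.zero_le_real.mp (by
      rw [← psd_diag_eq_re (hρ i).1 j]; exact psd_diag_nonneg (hρ i).1 j))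
  · intro i
    have h := (hρ i).2
    have : ((∑ j, (ρ i j j).re : ℝ) : ℂ) = 1 := by
      push_cast
      rw [← h, Matrix.trace]
      exact Finset.sum_congr rfl fun j _ => (psd_diag_eq_re (hρ i).1 j).symm
    exact_mod_cast this
  · intro j k
    exact (Complex.zero_le_real.mp (by
      rw [← psd_diag_eq_re (hM k) j]; exact psd_diag_nonneg (hM k) j))
  · intro j
    have h : ∑ k, M k j j = 1 := by
      have := congrArg (fun A => A j j) hMsum
      simpa [Matrix.sum_apply, Matrix.one_apply] using this
    have : ((∑ k, (M k j j).re : ℝ) : ℂ) = 1 := by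
      push_cast
      rw [← h]
      exact Finset.sum_congr rfl fun k _ => (psd_diag_eq_re (hM k) j).symm
    exact_mod_cast this
  · intro i k
    rw [Matrix.trace]
    push_cast
    refine Finset.sum_congr rfl fun j _ => ?_
    show (M k * ρ i) j j = _
    rw [Matrix.mul_apply]
    have : ∀ a ∈ Finset.univ, a ≠ j → M k j a * ρ i a j = 0 := by
      intro a _ ha
      rw [hdiag i a j ha, mul_zero]
    rw [Finset.sum_eq_single_of_mem j (Finset.mem_univ j) (fun a _ ha => this a (Finset.mem_univ a) ha)]
    rw [psd_diag_eq_re (hM k) j, psd_diag_eq_re (hρ i).1 j]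
    simp [mul_comm]
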